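/- Parameterized Deduction Theorem: for positive rationals ε and ε', formulae φ ∈ L⁺ and ψ ∈ L: (1) if ⊢_{ε'+ε} (φ → ψ) and ⊢_{ε'} φ, then ⊢_{ε'+ε} ψ; (2) if ⊢_{ε'+ε} (¬ψ → ¬φ) and ⊢_{ε'} φ, then ⊢_{ε'+ε} ψ. -/

import Mathlib

open MeasureTheory Set
open scoped ENNReal NNReal

/-- Formulae of Continuous Markovian Logic (CML):
`φ ::= ⊤ | ¬φ | φ ∧ φ | L_r φ` with `r` a nonnegative rational. -/
inductive CML : Type
  | top : CML
  | neg : CML → CML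
  | and : CML → CML → CML
  | L : NNRat → CML → CML

namespace CML

/-- Derived falsity `⊥ = ¬⊤`. -/
def bot : CML := neg top

/-- Derived disjunction `φ ∨ ψ = ¬(¬φ ∧ ¬ψ)`. -/
def or (φ ψ : CML) : CML := neg (and (neg φ) (neg ψ))

/-- Derived implication `φ → ψ = ¬(φ ∧ ¬ψ)`. -/
def imp (φ ψ : CML) : CML := neg (and φ (neg ψ))

/-- The positive fragment `L⁺`, generated by `ψ ::= ⊤ | ψ∧ψ | ψ∨ψ | L_r ψ`. -/
inductive Pos : CML → Prop
  | top : Pos top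
  | and {φ ψ : CML} : Pos φ → Pos ψ → Pos (and φ ψ)
  | or {φ ψ : CML} : Pos φ → Pos ψ → Pos (or φ ψ)
  | L {φ : CML} (r : NNRat) : Pos φ → Pos (L r φ)

/-- The negative fragment `L⁻ = {¬φ : φ ∈ L⁺}`. -/
def NegF (φ : CML) : Prop := ∃ ψ : CML, Pos ψ ∧ φ = neg ψ

end CML

/-- The ε-satisfiability relation on a continuous Markov kernel with transition function `θ`:
`m ⊨_ε L_r φ` iff `θ(m)(⟦φ⟧_ε) + ε ≥ r`. -/
def sat {M : Type*} [MeasurableSpace M] (θ : M → Measure M) (ε : NNRat) :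
    M → CML → Prop
  | _, CML.top => True
  | m, CML.neg φ => ¬ sat θ ε m φ
  | m, CML.and φ ψ => sat θ ε m φ ∧ sat θ ε m ψ
  | m, CML.L r φ => ((r : ℝ≥0) : ℝ≥0∞) ≤ θ m {n | sat θ ε n φ} + ((ε : ℝ≥0) : ℝ≥0∞)

/-- A set `C` is `R`-closed iff `C^R ⊆ C`, where `C^R = {x | ∃ c ∈ C, (c,x) ∈ R}`. -/
def closR {M : Type*} (R : M → M → Prop) (C : Set M) : Set M := {x | ∃ c ∈ C, R c x}

def RClosed {M : Type*} (R : M → M → Prop) (C : Set M) : Prop := closR R C ⊆ C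

/-- `R` is a stochastic bisimulation: related states assign equal measure to every
measurable `R`-closed set. -/
def IsBisim {M : Type*} [MeasurableSpace M] (θ : M → Measure M) (R : M → M → Prop) : Prop :=
  ∀ m n : M, R m n → ∀ C : Set M, MeasurableSet C → RClosed R C → θ m C = θ n C

/-- Stochastic bisimilarity: being related by some stochastic bisimulation. -/
def Bisim {M : Type*} [MeasurableSpace M] (θ : M → Measure M) (m n : M) : Prop :=
  ∃ R : M → M → Prop, IsBisim θ R ∧ R m n
/-- The encoding `⟨·⟩_ε`, lowering all modal indices: `⟨L_r φ⟩_ε = L_{r ∸ ε} ⟨φ⟩_ε`. -/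
def lowE (ε : NNRat) : CML → CML
  | CML.top => CML.top
  | CML.neg φ => CML.neg (lowE ε φ)
  | CML.and φ ψ => CML.and (lowE ε φ) (lowE ε ψ)
  | CML.L r φ => CML.L (r - ε) (lowE ε φ)

/-- The encoding `⟨·⟩^ε`, raising all modal indices: `⟨L_r φ⟩^ε = L_{r+ε} ⟨φ⟩^ε`. -/
def upE (ε : NNRat) : CML → CML
  | CML.top => CML.top
  | CML.neg φ => CML.neg (upE ε φ)
  | CML.and φ ψ => CML.and (upE ε φ) (upE ε ψ)
  | CML.L r φ => CML.L (r + ε) (upE ε φ)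

/-- Every modal index `r` occurring in a subformula `L_r ψ` of `φ` satisfies `r ≥ ε`. -/
def IndGe (ε : NNRat) : CML → Prop
  | CML.top => True
  | CML.neg φ => IndGe ε φ
  | CML.and φ ψ => IndGe ε φ ∧ IndGe ε ψ
  | CML.L r φ => ε ≤ r ∧ IndGe ε φ

/-- Boolean evaluation of a formula, treating modal formulae `L_r φ` as atoms. -/
def evalB (v : CML → Bool) : CML → Bool
  | CML.top => true
  | CML.neg φ => !(evalB v φ)
  | CML.and φ ψ => evalB v φ && evalB v ψ
  | CML.L r φ => v (CML.L r φ)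

/-- Propositional tautologies (with modal subformulae regarded as atoms). -/
def Taut (φ : CML) : Prop := ∀ v : CML → Bool, evalB v φ = true

/-- The ε-provability relation `⊢_ε`: classical propositional logic together with
(A1)-(A4), (R1)-(R3). -/
inductive Prov (ε : NNRat) : CML → Prop
  | taut {φ : CML} : Taut φ → Prov ε φ
  | mp {φ ψ : CML} : Prov ε (φ.imp ψ) → Prov ε φ → Prov ε ψ
  | a1 (φ : CML) : Prov ε (CML.L ε φ)
  | a2 (r s : NNRat) (φ : CML) : Prov ε ((CML.L (r + s) φ).imp (CML.L r φ))
  | a3 (r s : NNRat) (φ ψ : CML) :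
      Prov ε (((CML.L r (φ.and ψ)).and (CML.L s (φ.and ψ.neg))).imp (CML.L (r + s - ε) φ))
  | a4 (r s : NNRat) (φ ψ : CML) :
      Prov ε ((((CML.L r (φ.and ψ)).neg).and ((CML.L s (φ.and ψ.neg)).neg)).imp
        ((CML.L (r + s - ε) φ).neg))
  | r1 {φ ψ : CML} (r : NNRat) : Prov ε (φ.imp ψ) → Prov ε ((CML.L r φ).imp (CML.L r ψ))
  | r2 {φ : CML} (s : NNRat) : (∀ r : NNRat, r < s → Prov ε (CML.L r φ)) →
      Prov ε (CML.L s φ)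
  | r3 {φ : CML} (s : NNRat) : (∀ r : NNRat, r > s → Prov ε (CML.L r φ)) →
      Prov ε CML.bot

/-- ε-validity: `φ` holds at every state of every continuous Markov kernel, i.e. of every
analytic Borel space with a measurable transition function assigning finite measures. -/
def Valid (ε : NNRat) (φ : CML) : Prop :=
  ∀ (M : Type) [TopologicalSpace M] [MeasurableSpace M] [BorelSpace M],
    AnalyticSet (univ : Set M) →
      ∀ θ : M → Measure M, Measurable θ → (∀ m : M, θ m univ ≠ ∞) →
        ∀ m : M, sat θ ε m φ

/-- `R` is closed under stochastic bisimilarity. -/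
def ClosedUnderBisim {M : Type*} [MeasurableSpace M] (θ : M → Measure M)
    (R : M → M → Prop) : Prop :=
  ∀ m n m' n' : M, R m n → Bisim θ m m' → Bisim θ n n' → R m' n'

/-- `R` is an ε-behavioral order: it is closed under bisimilarity and whenever `m R n`,
`θ(n)(C) − θ(m)(C^R) ≤ ε` for every `C` in the bisimulation generator
`G_M = {⟦φ⟧_0 : φ ∈ L⁺}`. -/
def IsEpsOrder {M : Type*} [MeasurableSpace M] (θ : M → Measure M) (ε : NNRat)
    (R : M → M → Prop) : Prop :=
  ClosedUnderBisim θ R ∧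
    ∀ m n : M, R m n → ∀ φ : CML, CML.Pos φ →
      θ n {x | sat θ 0 x φ} ≤ θ m (closR R {x | sat θ 0 x φ}) + ((ε : ℝ≥0) : ℝ≥0∞)

/-- `m ≺_ε n`: the largest ε-behavioral order. -/
def prec {M : Type*} [MeasurableSpace M] (θ : M → Measure M) (ε : NNRat) (m n : M) : Prop :=
  ∃ R : M → M → Prop, IsEpsOrder θ ε R ∧ R m n

/-- `R` is an essential ε-behavioral order: it is closed under bisimilarity and whenever
`m R n`, `θ(n)(C) − θ(m)(C^R) ∈ [0, ε]` for every `C` in the extended bisimulation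
generator `\overline{G_M} = {⟦φ⟧_0 : φ ∈ L}`. -/
def IsEssEpsOrder {M : Type*} [MeasurableSpace M] (θ : M → Measure M) (ε : NNRat)
    (R : M → M → Prop) : Prop :=
  ClosedUnderBisim θ R ∧
    ∀ m n : M, R m n → ∀ φ : CML,
      θ m (closR R {x | sat θ 0 x φ}) ≤ θ n {x | sat θ 0 x φ} ∧
      θ n {x | sat θ 0 x φ} ≤ θ m (closR R {x | sat θ 0 x φ}) + ((ε : ℝ≥0) : ℝ≥0∞)

/-- `m ≺⁺_ε n`: the largest essential ε-behavioral order. -/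
def precP {M : Type*} [MeasurableSpace M] (θ : M → Measure M) (ε : NNRat) (m n : M) : Prop :=
  ∃ R : M → M → Prop, IsEssEpsOrder θ ε R ∧ R m n

/-- The encoding `|·|_ε` on formulae in disjunctive normal form (with `L_r φ` treated as
atoms): `DNFEnc ε φ φ'` means `φ` is in disjunctive normal form and `φ' = |φ|_ε`. -/
inductive DNFEnc (ε : NNRat) : CML → CML → Prop
  | top : DNFEnc ε CML.top CML.top
  | bot : DNFEnc ε CML.bot CML.bot
  | L {ψ ψ' : CML} (r : NNRat) : DNFEnc ε ψ ψ' → DNFEnc ε (CML.L r ψ) (CML.L r ψ')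
  | negL {ψ ψ' : CML} (r : NNRat) :
      DNFEnc ε ψ ψ' → DNFEnc ε ((CML.L r ψ).neg) ((CML.L (r + ε) ψ').neg)
  | and {φ φ' χ χ' : CML} :
      DNFEnc ε φ φ' → DNFEnc ε χ χ' → DNFEnc ε (φ.and χ) (φ'.and χ')
  | or {φ φ' χ χ' : CML} :
      DNFEnc ε φ φ' → DNFEnc ε χ χ' → DNFEnc ε (CML.or φ χ) (CML.or φ' χ')

/-- The behavioural distance `d(m,n) = inf {ε | m ≺_ε n and n ≺_ε m}`. -/
noncomputable def bdist {M : Type*} [MeasurableSpace M] (θ : M → Measure M)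
    (m n : M) : ℝ≥0 :=
  sInf {x : ℝ≥0 | ∃ ε : NNRat, x = (ε : ℝ≥0) ∧ prec θ ε m n ∧ prec θ ε n m}

section Aux

-- tautology helpers
lemma taut_k (A B : CML) : Taut (B.imp (A.imp B)) := by
  intro v; simp only [CML.imp, evalB]
  cases evalB v A <;> cases evalB v B <;> simp

lemma taut_trans (A B C : CML) : Taut ((A.imp B).imp ((B.imp C).imp (A.imp C))) := by
  intro v; simp only [CML.imp, evalB]
  cases evalB v A <;> cases evalB v B <;> cases evalB v C <;> simp

lemma taut_contra (A B : CML) : Taut ((A.imp B).imp (B.neg.imp A.neg)) := by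
  intro v; simp only [CML.imp, evalB]
  cases evalB v A <;> cases evalB v B <;> simp

lemma taut_and_mono (A B C D : CML) :
    Taut ((A.imp B).imp ((C.imp D).imp ((A.and C).imp (B.and D)))) := by
  intro v; simp only [CML.imp, evalB]
  cases evalB v A <;> cases evalB v B <;> cases evalB v C <;> cases evalB v D <;> simp

lemma taut_or_mono (A B C D : CML) :
    Taut ((A.imp B).imp ((C.imp D).imp ((A.or C).imp (B.or D)))) := by
  intro v; simp only [CML.imp, CML.or, evalB]
  cases evalB v A <;> cases evalB v B <;> cases evalB v C <;> cases evalB v D <;> simp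

lemma taut_contrapos (A B : CML) : Taut (((B.neg).imp (A.neg)).imp (A.imp B)) := by
  intro v; simp only [CML.imp, evalB]
  cases evalB v A <;> cases evalB v B <;> simp

lemma taut_id (A : CML) : Taut (A.imp A) := by
  intro v; simp only [CML.imp, evalB]; cases evalB v A <;> simp

variable {δ : NNRat}

lemma prov_imp_of {A B : CML} (h : Prov δ B) : Prov δ (A.imp B) :=
  (Prov.taut (taut_k A B)).mp h

lemma prov_trans {A B C : CML} (h1 : Prov δ (A.imp B)) (h2 : Prov δ (B.imp C)) :
    Prov δ (A.imp C) :=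
  ((Prov.taut (taut_trans A B C)).mp h1).mp h2

lemma prov_contra {A B : CML} (h : Prov δ (A.imp B)) : Prov δ (B.neg.imp A.neg) :=
  (Prov.taut (taut_contra A B)).mp h

lemma prov_and_mono {A B C D : CML} (h1 : Prov δ (A.imp B)) (h2 : Prov δ (C.imp D)) :
    Prov δ ((A.and C).imp (B.and D)) :=
  ((Prov.taut (taut_and_mono A B C D)).mp h1).mp h2

lemma prov_or_mono {A B C D : CML} (h1 : Prov δ (A.imp B)) (h2 : Prov δ (C.imp D)) :
    Prov δ ((A.or C).imp (B.or D)) :=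
  ((Prov.taut (taut_or_mono A B C D)).mp h1).mp h2

lemma prov_index_mono {r s : NNRat} (h : s ≤ r) (φ : CML) :
    Prov δ ((CML.L r φ).imp (CML.L s φ)) := by
  have : r = s + (r - s) := (add_tsub_cancel_of_le h).symm
  rw [this]; exact Prov.a2 s (r - s) φ

lemma prov_L_small {c : NNRat} (h : c ≤ δ) (φ : CML) : Prov δ (CML.L c φ) :=
  (prov_index_mono h φ).mp (Prov.a1 φ)

lemma evalB_upE (ε : NNRat) (v : CML → Bool) : ∀ χ : CML,
    evalB v (upE ε χ) = evalB (fun a => v (upE ε a)) χ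
  | CML.top => rfl
  | CML.neg φ => by simp only [upE, evalB, evalB_upE ε v φ]
  | CML.and φ ψ => by simp only [upE, evalB, evalB_upE ε v φ, evalB_upE ε v ψ]
  | CML.L r φ => rfl

lemma upE_imp (ε : NNRat) (φ ψ : CML) :
    upE ε (φ.imp ψ) = (upE ε φ).imp (upE ε ψ) := rfl

/-- Key lemma: raising all indices by ε turns an ε'-proof into an (ε'+ε)-proof. -/
lemma prov_up (ε ε' : NNRat) : ∀ {χ : CML}, Prov ε' χ → Prov (ε' + ε) (upE ε χ) := by
  intro χ h
  induction h with
  | @taut φ ht =>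
      exact Prov.taut (fun v => by rw [evalB_upE]; exact ht _)
  | mp h1 h2 ih1 ih2 => exact Prov.mp ih1 ih2
  | a1 φ => exact Prov.a1 (upE ε φ)
  | a2 r s φ =>
      show Prov (ε' + ε) ((CML.L (r + s + ε) (upE ε φ)).imp (CML.L (r + ε) (upE ε φ)))
      exact prov_index_mono (by gcongr; exact le_add_right le_rfl) _
  | a3 r s φ ψ =>
      show Prov (ε' + ε)
        (((CML.L (r+ε) ((upE ε φ).and (upE ε ψ))).and
          (CML.L (s+ε) ((upE ε φ).and (upE ε ψ).neg))).imp
          (CML.L (r + s - ε' + ε) (upE ε φ)))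
      rcases le_or_gt ε' (r + s) with hle | hlt
      · have h3 := Prov.a3 (ε := ε' + ε) (r+ε) (s+ε) (upE ε φ) (upE ε ψ)
        have hidx : r + ε + (s + ε) - (ε' + ε) = r + s - ε' + ε := by
          have h1 : r + ε + (s + ε) = (r + s + ε) + ε := by ring
          rw [h1, add_tsub_add_eq_tsub_right, tsub_add_eq_add_tsub hle]
        rwa [hidx] at h3
      · have h0 : r + s - ε' = 0 := tsub_eq_zero_of_le hlt.le
        rw [h0, zero_add]
        exact prov_imp_of (prov_L_small (le_add_left le_rfl) _)
  | a4 r s φ ψ =>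
      show Prov (ε' + ε)
        ((((CML.L (r+ε) ((upE ε φ).and (upE ε ψ))).neg).and
          ((CML.L (s+ε) ((upE ε φ).and (upE ε ψ).neg)).neg)).imp
          ((CML.L (r + s - ε' + ε) (upE ε φ)).neg))
      have h4 := Prov.a4 (ε := ε' + ε) (r+ε) (s+ε) (upE ε φ) (upE ε ψ)
      have hidx : r + ε + (s + ε) - (ε' + ε) = r + s + ε - ε' := by
        have h1 : r + ε + (s + ε) = (r + s + ε) + ε := by ring
        rw [h1, add_tsub_add_eq_tsub_right]
      rw [hidx] at h4
      have hle : r + s + ε - ε' ≤ r + s - ε' + ε := by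
        rw [tsub_le_iff_right]
        calc r + s + ε ≤ (r + s - ε' + ε') + ε := add_le_add le_tsub_add le_rfl
        _ = r + s - ε' + ε + ε' := by ring
      exact prov_trans h4 (prov_contra (prov_index_mono hle _))
  | r1 r h ih => exact Prov.r1 (r + ε) ih
  | @r2 φ s h ih =>
      apply Prov.r2 (s + ε)
      intro r' hr'
      rcases le_or_gt ε r' with hle | hlt
      · have h2 := ih (r' - ε) (by rwa [tsub_lt_iff_right hle])
        rw [show r' = r' - ε + ε from (tsub_add_cancel_of_le hle).symm]
        exact h2
      · exact prov_L_small (hlt.le.trans (le_add_left le_rfl)) _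
  | @r3 φ s h ih =>
      show Prov (ε' + ε) CML.bot
      apply Prov.r3 (φ := upE ε φ) (s + ε)
      intro r' hr'
      have hle : ε ≤ r' := le_of_lt (lt_of_le_of_lt (le_add_left le_rfl) hr')
      have h2 := ih (r' - ε) (show s < r' - ε by rwa [lt_tsub_iff_right])
      have h3 : CML.L (r' - ε + ε) (upE ε φ) = CML.L r' (upE ε φ) := by
        rw [tsub_add_cancel_of_le hle]
      rw [← h3]
      exact h2

/-- For positive φ, the raised version implies φ. -/
lemma prov_up_imp (ε : NNRat) {φ : CML} (hφ : CML.Pos φ) :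
    Prov δ ((upE ε φ).imp φ) := by
  induction hφ with
  | top => exact Prov.taut (taut_id _)
  | and h1 h2 ih1 ih2 => exact prov_and_mono ih1 ih2
  | or h1 h2 ih1 ih2 => exact prov_or_mono ih1 ih2
  | @L φ r h ih =>
      exact prov_trans (prov_index_mono (le_add_right le_rfl) (upE ε φ)) (Prov.r1 r ih)

end Aux

/-- parameterized deduction theorem. -/
theorem param_deduction (ε ε' : NNRat) (hε : 0 < ε) (hε' : 0 < ε')
    (φ : CML) (hφ : CML.Pos φ) (ψ : CML) :
    (Prov (ε' + ε) (φ.imp ψ) → Prov ε' φ → Prov (ε' + ε) ψ) ∧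
    (Prov (ε' + ε) ((ψ.neg).imp (φ.neg)) → Prov ε' φ → Prov (ε' + ε) ψ) := by
  have key : Prov ε' φ → Prov (ε' + ε) φ := fun h =>
    (prov_up_imp ε hφ).mp (prov_up ε ε' h)
  constructor
  · exact fun h1 h2 => h1.mp (key h2)
  · exact fun h1 h2 => ((Prov.taut (taut_contrapos φ ψ)).mp h1).mp (key h2)
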